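/- arXiv:2310.17248 — 7 statements merged into one kernel-verified Lean document; each statement's English description precedes it below -/
import Mathlib

section
/- (Fisher's identity, equation (2), for the PET model.) Let λ0 be admissible. For every b ∈ B, the partial derivative of Q(·, λ0) with respect to the coordinate λ b, evaluated at λ = λ0, equals the partial derivative of the incomplete-data log-likelihood ℓ with respect to λ b at λ0; both equal −1 + ∑_{d ∈ D} n d * p b d / g λ0 d. -/
open scoped BigOperators

/-- Forward projection: `g p lam d = ∑ b, p b d * lam b`. -/
noncomputable def g {B D : Type*} [Fintype B] (p : B → D → ℝ) (lam : B → ℝ) (d : D) : ℝ :=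
  ∑ b, p b d * lam b

/-- Incomplete-data log-likelihood `ℓ lam = ∑ d, (n d * log (g lam d) - g lam d)`. -/
noncomputable def logLik {B D : Type*} [Fintype B] [Fintype D]
    (p : B → D → ℝ) (n : D → ℝ) (lam : B → ℝ) : ℝ :=
  ∑ d, (n d * Real.log (g p lam d) - g p lam d)

/-- Observed Fisher information `I lam b₁ b₂ = ∑ d, (n d / (g lam d)^2) * p b₁ d * p b₂ d`. -/
noncomputable def fisherI {B D : Type*} [Fintype B] [Fintype D]
    (p : B → D → ℝ) (n : D → ℝ) (lam : B → ℝ) (b₁ b₂ : B) : ℝ :=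
  ∑ d, (n d / (g p lam d) ^ 2) * p b₁ d * p b₂ d

/-- EM surrogate `Q lam lam0` (with Lean's convention `Real.log 0 = 0`). -/
noncomputable def Qsur {B D : Type*} [Fintype B] [Fintype D]
    (p : B → D → ℝ) (n : D → ℝ) (lam lam0 : B → ℝ) : ℝ :=
  ∑ d, n d * ∑ b, (p b d * lam0 b / g p lam0 d) * Real.log (lam b * p b d) - ∑ b, lam b

/-- The Shepp–Vardi EM update `T lam b = lam b * ∑ d, n d * p b d / g lam d`. -/
noncomputable def emT {B D : Type*} [Fintype B] [Fintype D]
    (p : B → D → ℝ) (n : D → ℝ) (lam : B → ℝ) (b : B) : ℝ :=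
  lam b * ∑ d, n d * p b d / g p lam d

/-- `lam` is admissible: positive charges, and positive projection wherever a count was observed. -/
def Admissible {B D : Type*} [Fintype B] [Fintype D]
    (p : B → D → ℝ) (n : D → ℝ) (lam : B → ℝ) : Prop :=
  (∀ b, lam b > 0) ∧ ∀ d, n d > 0 → g p lam d > 0

/-- Fisher's identity for PET: at λ = λ0 the partial derivatives of the
surrogate Q(·, λ0) and of the log-likelihood ℓ coincide, both equal to
`-1 + ∑ d, n d * p b d / g λ0 d`. -/
theorem fisher_identity {B D : Type*} [Fintype B] [Fintype D] [Nonempty B] [Nonempty D]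
    (p : B → D → ℝ) (hp : ∀ b d, 0 ≤ p b d) (hpsum : ∀ b, ∑ d, p b d = 1)
    (n : D → ℝ) (hn : ∀ d, 0 ≤ n d) [DecidableEq B]
    (lam0 : B → ℝ) (hlam0 : Admissible p n lam0) (b : B) :
    HasDerivAt (fun t : ℝ => Qsur p n (Function.update lam0 b t) lam0)
      (-1 + ∑ d, n d * p b d / g p lam0 d) (lam0 b) ∧
    HasDerivAt (fun t : ℝ => logLik p n (Function.update lam0 b t))
      (-1 + ∑ d, n d * p b d / g p lam0 d) (lam0 b) := by
  obtain ⟨hl0, hg0⟩ := hlam0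
  -- g of the updated family is affine in t
  have hgaff : ∀ (d : D) (t : ℝ), g p (Function.update lam0 b t) d
      = p b d * t + (g p lam0 d - p b d * lam0 b) := by
    intro d t
    have h1 : g p lam0 d = p b d * lam0 b + ∑ b' ∈ Finset.univ.erase b, p b' d * lam0 b' := by
      rw [g, ← Finset.add_sum_erase _ _ (Finset.mem_univ b)]
    rw [g, ← Finset.add_sum_erase _ (fun b' => p b' d * Function.update lam0 b t b')
        (Finset.mem_univ b), Function.update_self,
      Finset.sum_congr rfl
        (fun b' hb' => by rw [Function.update_of_ne (Finset.ne_of_mem_erase hb')]), h1]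
    ring
  have hgd : ∀ (d : D) (t : ℝ),
      HasDerivAt (fun t => g p (Function.update lam0 b t) d) (p b d) t := by
    intro d t
    have h := ((hasDerivAt_id t).const_mul (p b d)).add_const (g p lam0 d - p b d * lam0 b)
    simp only [mul_one, id_eq] at h
    simpa only [hgaff] using h
  -- the log-likelihood part
  have hL : HasDerivAt (fun t : ℝ => logLik p n (Function.update lam0 b t))
      (∑ d, (n d * p b d / g p lam0 d - p b d)) (lam0 b) := by
    simp only [logLik]
    apply HasDerivAt.fun_sum
    intro d _
    by_cases hnd : n d = 0
    · simpa [hnd] using (hgd d (lam0 b)).fun_neg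
    · have hg : 0 < g p lam0 d := hg0 d (lt_of_le_of_ne (hn d) (Ne.symm hnd))
      have hne : g p (Function.update lam0 b (lam0 b)) d ≠ 0 := by
        rw [Function.update_eq_self]; exact hg.ne'
      have hlog := ((hgd d (lam0 b)).log hne).const_mul (n d)
      have h := hlog.fun_sub (hgd d (lam0 b))
      simpa [Function.update_eq_self, mul_div_assoc] using h
  have hsum : ∑ d, (n d * p b d / g p lam0 d - p b d)
      = -1 + ∑ d, n d * p b d / g p lam0 d := by
    rw [Finset.sum_sub_distrib, hpsum b]; ring
  -- derivative of the linear penalty term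
  have h2 : HasDerivAt (fun t : ℝ => ∑ b', Function.update lam0 b t b') 1 (lam0 b) := by
    have h := (hasDerivAt_id (lam0 b)).add_const (∑ b' ∈ Finset.univ \ {b}, lam0 b')
    have heq : (fun t : ℝ => ∑ b', Function.update lam0 b t b')
        = fun t : ℝ => t + ∑ b' ∈ Finset.univ \ {b}, lam0 b' := by
      funext t
      rw [Finset.sum_update_of_mem (Finset.mem_univ b)]
    rw [heq]
    exact h
  -- derivative of the weighted-log part of Q
  have h1 : HasDerivAt
      (fun t : ℝ => ∑ d, n d * ∑ b', (p b' d * lam0 b' / g p lam0 d)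
          * Real.log (Function.update lam0 b t b' * p b' d))
      (∑ d, n d * (p b d / g p lam0 d)) (lam0 b) := by
    apply HasDerivAt.fun_sum
    intro d _
    apply HasDerivAt.const_mul
    have hinner : ∀ b' ∈ Finset.univ, HasDerivAt
        (fun t : ℝ => (p b' d * lam0 b' / g p lam0 d)
            * Real.log (Function.update lam0 b t b' * p b' d))
        (if b' = b then p b d / g p lam0 d else 0) (lam0 b) := by
      intro b' _
      by_cases hb' : b' = b
      · subst hb'
        by_cases hp0 : p b' d = 0
        · simpa [hp0] using hasDerivAt_const (lam0 b') (0 : ℝ)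
        · by_cases hgd0 : g p lam0 d = 0
          · simpa [hgd0] using hasDerivAt_const (lam0 b') (0 : ℝ)
          · have hlb := hl0 b'
            have hmul : HasDerivAt (fun t : ℝ => Function.update lam0 b' t b' * p b' d)
                (p b' d) (lam0 b') := by
              simp only [Function.update_self]
              simpa using (hasDerivAt_id (lam0 b')).mul_const (p b' d)
            have hx : Function.update lam0 b' (lam0 b') b' * p b' d ≠ 0 := by
              rw [Function.update_self]
              exact mul_ne_zero hlb.ne' hp0
            have h := (hmul.log hx).const_mul (p b' d * lam0 b' / g p lam0 d)
            convert h using 1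
            case e'_4 => rfl
            case e'_5 => rfl
            rw [if_pos rfl, Function.update_self]
            field_simp
      · simp only [Function.update_of_ne hb', if_neg hb']
        exact hasDerivAt_const _ _
    have h := HasDerivAt.fun_sum hinner
    simpa using h
  have hQ := h1.sub h2
  have hsum2 : ∑ d, n d * (p b d / g p lam0 d) - 1
      = -1 + ∑ d, n d * p b d / g p lam0 d := by
    simp only [mul_div_assoc]
    ring
  constructor
  · simp only [Qsur]
    rw [← hsum2]
    exact hQ
  · rw [← hsum]
    exact hL
end

section
/- (EM minorization inequality for the PET model.) For all admissible λ0 and λ, ℓ λ − ℓ λ0 ≥ Q λ λ0 − Q λ0 λ0. -/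
open scoped BigOperators

/-- EM minorization: `ℓ λ − ℓ λ0 ≥ Q λ λ0 − Q λ0 λ0`. -/
theorem em_minorization {B D : Type*} [Fintype B] [Fintype D] [Nonempty B] [Nonempty D]
    (p : B → D → ℝ) (hp : ∀ b d, 0 ≤ p b d) (hpsum : ∀ b, ∑ d, p b d = 1)
    (n : D → ℝ) (hn : ∀ d, 0 ≤ n d)
    (lam0 : B → ℝ) (hlam0 : Admissible p n lam0)
    (lam : B → ℝ) (hlam : Admissible p n lam) :
    logLik p n lam - logLik p n lam0 ≥ Qsur p n lam lam0 - Qsur p n lam0 lam0 := by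
  obtain ⟨hpos0, hg0⟩ := hlam0
  obtain ⟨hpos, hg1⟩ := hlam
  have hmass : ∀ μ : B → ℝ, ∑ d, g p μ d = ∑ b, μ b := by
    intro μ
    simp only [g]
    rw [Finset.sum_comm]
    refine Finset.sum_congr rfl fun b _ => ?_
    rw [← Finset.sum_mul, hpsum, one_mul]
  have key : ∀ d, 0 ≤ n d * (Real.log (g p lam d) - Real.log (g p lam0 d)
      - ∑ b, (p b d * lam0 b / g p lam0 d) *
        (Real.log (lam b * p b d) - Real.log (lam0 b * p b d))) := by
    intro d
    rcases eq_or_lt_of_le (hn d) with h | h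
    · simp [← h]
    apply mul_nonneg h.le
    have hg0d : 0 < g p lam0 d := hg0 d h
    have hg1d : 0 < g p lam d := hg1 d h
    set C := Real.log (g p lam d) - Real.log (g p lam0 d) with hC
    have hb : ∀ b, (p b d * lam0 b / g p lam0 d) *
        (Real.log (lam b * p b d) - Real.log (lam0 b * p b d))
        ≤ p b d * lam b / g p lam d - p b d * lam0 b / g p lam0 d
          + (p b d * lam0 b / g p lam0 d) * C := by
      intro b
      rcases eq_or_lt_of_le (hp b d) with hpb | hpb
      · simp [← hpb]
      · have hwpos : 0 < p b d * lam0 b / g p lam0 d :=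
          div_pos (mul_pos hpb (hpos0 b)) hg0d
        have hqpos : 0 < p b d * lam b / g p lam d :=
          div_pos (mul_pos hpb (hpos b)) hg1d
        set w := p b d * lam0 b / g p lam0 d with hw
        set q := p b d * lam b / g p lam d with hq
        have h1 : (0:ℝ) < lam b * p b d := mul_pos (hpos b) hpb
        have h2 : (0:ℝ) < lam0 b * p b d := mul_pos (hpos0 b) hpb
        have e : q / w = (lam b * p b d) / (lam0 b * p b d) * (g p lam0 d / g p lam d) := by
          rw [hq, hw]
          field_simp [hpb.ne', (hpos0 b).ne', (hpos b).ne']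
        have hlog : Real.log (lam b * p b d) - Real.log (lam0 b * p b d) - C
            = Real.log (q / w) := by
          rw [e, Real.log_mul (div_pos h1 h2).ne' (div_pos hg0d hg1d).ne',
            Real.log_div h1.ne' h2.ne', Real.log_div hg0d.ne' hg1d.ne', hC]
          ring
        have h3 : w * Real.log (q / w) ≤ q - w := by
          have hle := Real.log_le_sub_one_of_pos (div_pos hqpos hwpos)
          have h4 : w * (q / w - 1) = q - w := by field_simp
          nlinarith [mul_le_mul_of_nonneg_left hle hwpos.le]
        have h5 : w * (Real.log (lam b * p b d) - Real.log (lam0 b * p b d))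
            = w * Real.log (q / w) + w * C := by
          rw [← hlog]; ring
        rw [h5]; linarith
    have hw1 : ∑ b, p b d * lam0 b / g p lam0 d = 1 := by
      rw [← Finset.sum_div]
      exact div_self (by simpa [g] using hg0d.ne')
    have hq1 : ∑ b, p b d * lam b / g p lam d = 1 := by
      rw [← Finset.sum_div]
      exact div_self (by simpa [g] using hg1d.ne')
    have hsum : ∑ b, (p b d * lam0 b / g p lam0 d) *
        (Real.log (lam b * p b d) - Real.log (lam0 b * p b d)) ≤ C := by
      calc ∑ b, (p b d * lam0 b / g p lam0 d) *
          (Real.log (lam b * p b d) - Real.log (lam0 b * p b d))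
          ≤ ∑ b, (p b d * lam b / g p lam d - p b d * lam0 b / g p lam0 d
            + (p b d * lam0 b / g p lam0 d) * C) :=
            Finset.sum_le_sum fun b _ => hb b
        _ = (∑ b, p b d * lam b / g p lam d) - (∑ b, p b d * lam0 b / g p lam0 d)
            + (∑ b, p b d * lam0 b / g p lam0 d) * C := by
            rw [Finset.sum_add_distrib, Finset.sum_sub_distrib, ← Finset.sum_mul]
        _ = C := by rw [hw1, hq1]; ring
    linarith
  have expand : logLik p n lam - logLik p n lam0 - (Qsur p n lam lam0 - Qsur p n lam0 lam0)
      = ∑ d, n d * (Real.log (g p lam d) - Real.log (g p lam0 d)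
        - ∑ b, (p b d * lam0 b / g p lam0 d) *
          (Real.log (lam b * p b d) - Real.log (lam0 b * p b d))) := by
    simp only [logLik, Qsur, Finset.sum_sub_distrib]
    rw [hmass lam, hmass lam0]
    simp only [mul_sub, Finset.mul_sum, Finset.sum_sub_distrib]
    ring
  rw [ge_iff_le, ← sub_nonneg, expand]
  exact Finset.sum_nonneg fun d _ => key d
end

section
/- For all admissible λ0 and λ, if Q λ λ0 > Q λ0 λ0 then ℓ λ > ℓ λ0; in particular, any step that strictly increases the EM surrogate strictly increases the incomplete-data log-likelihood. -/
open scoped BigOperators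

/-- a strict increase of the EM surrogate strictly increases ℓ. -/
theorem em_strict_increase {B D : Type*} [Fintype B] [Fintype D] [Nonempty B] [Nonempty D]
    (p : B → D → ℝ) (hp : ∀ b d, 0 ≤ p b d) (hpsum : ∀ b, ∑ d, p b d = 1)
    (n : D → ℝ) (hn : ∀ d, 0 ≤ n d)
    (lam0 : B → ℝ) (hlam0 : Admissible p n lam0)
    (lam : B → ℝ) (hlam : Admissible p n lam)
    (hQ : Qsur p n lam lam0 > Qsur p n lam0 lam0) :
    logLik p n lam > logLik p n lam0 := by

  obtain ⟨h0pos, h0g⟩ := hlam0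
  obtain ⟨hpos, hg⟩ := hlam
  -- per-d key inequality
  have key : ∀ d, n d * ∑ b, (p b d * lam0 b / g p lam0 d) * Real.log (lam b * p b d)
      - n d * ∑ b, (p b d * lam0 b / g p lam0 d) * Real.log (lam0 b * p b d)
      ≤ n d * Real.log (g p lam d) - n d * Real.log (g p lam0 d) := by
    intro d
    rcases eq_or_lt_of_le (hn d) with h | hnd
    · simp [← h]
    · have hg0 : 0 < g p lam0 d := h0g d hnd
      have hgd : 0 < g p lam d := hg d hnd
      have main : ∑ b, (p b d * lam0 b / g p lam0 d) * Real.log (lam b * p b d)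
          - ∑ b, (p b d * lam0 b / g p lam0 d) * Real.log (lam0 b * p b d)
          ≤ Real.log (g p lam d) - Real.log (g p lam0 d) := by
        rw [← Finset.sum_sub_distrib]
        have perb : ∀ b ∈ Finset.univ, (p b d * lam0 b / g p lam0 d) * Real.log (lam b * p b d)
            - (p b d * lam0 b / g p lam0 d) * Real.log (lam0 b * p b d)
            ≤ (p b d * lam0 b / g p lam0 d) * (Real.log (g p lam d) - Real.log (g p lam0 d))
              + p b d * lam b / g p lam d - p b d * lam0 b / g p lam0 d := by
          intro b _
          rcases eq_or_lt_of_le (hp b d) with hpz | hpb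
          · simp [← hpz]
          · have hl := hpos b
            have hl0 := h0pos b
            have hx : (0:ℝ) < lam b * g p lam0 d / (lam0 b * g p lam d) := by positivity
            have hlog := Real.log_le_sub_one_of_pos hx
            have hlogx : Real.log (lam b * g p lam0 d / (lam0 b * g p lam d))
                = Real.log (lam b) + Real.log (g p lam0 d)
                  - (Real.log (lam0 b) + Real.log (g p lam d)) := by
              rw [Real.log_div (by positivity) (by positivity),
                Real.log_mul (ne_of_gt hl) (ne_of_gt hg0),
                Real.log_mul (ne_of_gt hl0) (ne_of_gt hgd)]
            rw [hlogx] at hlog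
            have hw : (0:ℝ) < p b d * lam0 b / g p lam0 d := by positivity
            have := mul_le_mul_of_nonneg_left hlog (le_of_lt hw)
            rw [Real.log_mul (ne_of_gt hl) (ne_of_gt hpb),
              Real.log_mul (ne_of_gt hl0) (ne_of_gt hpb)]
            have hwx : (p b d * lam0 b / g p lam0 d) * (lam b * g p lam0 d / (lam0 b * g p lam d))
                = p b d * lam b / g p lam d := by
              field_simp
            nlinarith [this]
        refine le_trans (Finset.sum_le_sum perb) ?_
        have hsw : ∑ b, p b d * lam0 b / g p lam0 d = 1 := by
          rw [← Finset.sum_div, div_eq_one_iff_eq (ne_of_gt hg0)]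
          rfl
        have hsl : ∑ b, p b d * lam b / g p lam d = 1 := by
          rw [← Finset.sum_div, div_eq_one_iff_eq (ne_of_gt hgd)]
          rfl
        rw [Finset.sum_sub_distrib, Finset.sum_add_distrib, ← Finset.sum_mul, hsw, hsl]
        simp
      nlinarith [mul_le_mul_of_nonneg_left main (le_of_lt hnd)]
  -- total mass identity
  have hmass : ∀ μ : B → ℝ, ∑ d, g p μ d = ∑ b, μ b := by
    intro μ
    unfold g
    rw [Finset.sum_comm]
    simp [← Finset.sum_mul, hpsum]
  have hL : ∀ μ : B → ℝ, logLik p n μ = ∑ d, n d * Real.log (g p μ d) - ∑ b, μ b := by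
    intro μ
    unfold logLik
    rw [Finset.sum_sub_distrib, hmass]
  have hsumkey := Finset.sum_le_sum (fun d (_ : d ∈ Finset.univ) => key d)
  rw [Finset.sum_sub_distrib, Finset.sum_sub_distrib] at hsumkey
  unfold Qsur at hQ
  rw [hL, hL]
  linarith
end

section
/- Let λ0 be admissible and assume that for every b ∈ B there exists d ∈ D with n d * p b d > 0 (so that T λ0 b > 0 for all b). Then the EM update T λ0 maximizes the surrogate: for every admissible λ, Q λ λ0 ≤ Q (T λ0) λ0, with equality if and only if λ = T λ0. -/
open scoped BigOperators

lemma key_pointwise {t x : ℝ} (ht : 0 < t) (hx : 0 < x) :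
    t * Real.log x - x ≤ t * Real.log t - t ∧
    (t * Real.log x - x = t * Real.log t - t ↔ x = t) := by
  have hlog : Real.log (x / t) ≤ x / t - 1 :=
    Real.log_le_sub_one_of_pos (div_pos hx ht)
  have hdiv : Real.log (x / t) = Real.log x - Real.log t := Real.log_div hx.ne' ht.ne'
  have h1 : t * Real.log (x / t) ≤ t * (x / t - 1) :=
    mul_le_mul_of_nonneg_left hlog ht.le
  have h2 : t * (x / t - 1) = x - t := by field_simp
  constructor
  · rw [hdiv, mul_sub] at h1; linarith
  · constructor
    · intro heq
      by_contra hne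
      have hne' : x / t ≠ 1 := by
        intro h; apply hne; field_simp at h; linarith
      have hlt : Real.log (x / t) < x / t - 1 :=
        Real.log_lt_sub_one_of_pos (div_pos hx ht) hne'
      have h1' : t * Real.log (x / t) < t * (x / t - 1) :=
        (mul_lt_mul_iff_right₀ ht).mpr hlt
      rw [hdiv, mul_sub] at h1'; linarith
    · rintro rfl; rfl

lemma Qsur_eq {B D : Type*} [Fintype B] [Fintype D]
    (p : B → D → ℝ) (hp : ∀ b d, 0 ≤ p b d)
    (n : D → ℝ)
    (lam0 : B → ℝ) (lam : B → ℝ) (hlam : ∀ b, 0 < lam b) :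
    Qsur p n lam lam0 =
      ∑ b, (emT p n lam0 b * Real.log (lam b) - lam b) +
      ∑ d, n d * ∑ b, (p b d * lam0 b / g p lam0 d) * Real.log (p b d) := by
  have step : ∀ d b, (p b d * lam0 b / g p lam0 d) * Real.log (lam b * p b d)
      = (p b d * lam0 b / g p lam0 d) * Real.log (lam b)
        + (p b d * lam0 b / g p lam0 d) * Real.log (p b d) := by
    intro d b
    rcases eq_or_lt_of_le (hp b d) with h | h
    · simp [← h]
    · rw [Real.log_mul (hlam b).ne' h.ne']; ring
  unfold Qsur
  have : ∑ d, n d * ∑ b, (p b d * lam0 b / g p lam0 d) * Real.log (lam b * p b d)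
      = ∑ d, n d * ∑ b, (p b d * lam0 b / g p lam0 d) * Real.log (lam b)
        + ∑ d, n d * ∑ b, (p b d * lam0 b / g p lam0 d) * Real.log (p b d) := by
    rw [← Finset.sum_add_distrib]
    refine Finset.sum_congr rfl fun d _ => ?_
    rw [← mul_add, ← Finset.sum_add_distrib]
    congr 1
    exact Finset.sum_congr rfl fun b _ => step d b
  rw [this]
  have hswap : ∑ d, n d * ∑ b, (p b d * lam0 b / g p lam0 d) * Real.log (lam b)
      = ∑ b, emT p n lam0 b * Real.log (lam b) := by
    calc ∑ d, n d * ∑ b, (p b d * lam0 b / g p lam0 d) * Real.log (lam b)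
        = ∑ d, ∑ b, (lam0 b * (n d * p b d / g p lam0 d)) * Real.log (lam b) := by
          refine Finset.sum_congr rfl fun d _ => ?_
          rw [Finset.mul_sum]
          exact Finset.sum_congr rfl fun b _ => by ring
      _ = ∑ b, ∑ d, (lam0 b * (n d * p b d / g p lam0 d)) * Real.log (lam b) :=
          Finset.sum_comm
      _ = ∑ b, emT p n lam0 b * Real.log (lam b) := by
          simp only [emT, Finset.sum_mul, Finset.mul_sum]
  rw [hswap, Finset.sum_sub_distrib]
  ring

/-- the EM update T λ0 maximizes the surrogate Q(·, λ0) over admissible λ,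
with equality iff λ = T λ0. -/
theorem emT_maximizes_surrogate {B D : Type*} [Fintype B] [Fintype D] [Nonempty B] [Nonempty D]
    (p : B → D → ℝ) (hp : ∀ b d, 0 ≤ p b d) (hpsum : ∀ b, ∑ d, p b d = 1)
    (n : D → ℝ) (hn : ∀ d, 0 ≤ n d)
    (lam0 : B → ℝ) (hlam0 : Admissible p n lam0)
    (hb : ∀ b, ∃ d, n d * p b d > 0) :
    ∀ lam : B → ℝ, Admissible p n lam →
      Qsur p n lam lam0 ≤ Qsur p n (emT p n lam0) lam0 ∧
      (Qsur p n lam lam0 = Qsur p n (emT p n lam0) lam0 ↔ lam = emT p n lam0) := by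
  intro lam hlam
  set t := emT p n lam0 with ht_def
  have ht : ∀ b, 0 < t b := by
    intro b
    have hsum : 0 < ∑ d, n d * p b d / g p lam0 d := by
      apply Finset.sum_pos'
      · intro d _
        rcases (hn d).lt_or_eq with h | h
        · have hg := hlam0.2 d h
          have hpd := hp b d
          positivity
        · simp [← h]
      · obtain ⟨d, hd⟩ := hb b
        refine ⟨d, Finset.mem_univ d, ?_⟩
        have hnd : 0 < n d := by
          rcases (hn d).lt_or_eq with h | h
          · exact h
          · exfalso; rw [← h] at hd; simpa using hd
        have hpd : 0 < p b d := by nlinarith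
        have hg := hlam0.2 d hnd
        positivity
    exact mul_pos (hlam0.1 b) hsum
  have hQlam := Qsur_eq p hp n lam0 lam hlam.1
  have hQt := Qsur_eq p hp n lam0 t ht
  set C := ∑ d, n d * ∑ b, (p b d * lam0 b / g p lam0 d) * Real.log (p b d)
  have hterm : ∀ b : B, t b * Real.log (lam b) - lam b ≤ t b * Real.log (t b) - t b :=
    fun b => (key_pointwise (ht b) (hlam.1 b)).1
  have hsumle : ∑ b, (t b * Real.log (lam b) - lam b) ≤ ∑ b, (t b * Real.log (t b) - t b) :=
    Finset.sum_le_sum fun b _ => hterm b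
  constructor
  · rw [hQlam, hQt]; linarith
  · rw [hQlam, hQt]
    constructor
    · intro heq
      have hsumeq : ∑ b, (t b * Real.log (lam b) - lam b)
          = ∑ b, (t b * Real.log (t b) - t b) := by linarith
      have hall : ∀ b ∈ Finset.univ, t b * Real.log (lam b) - lam b
          = t b * Real.log (t b) - t b :=
        (Finset.sum_eq_sum_iff_of_le fun b _ => hterm b).mp hsumeq
      funext b
      exact (key_pointwise (ht b) (hlam.1 b)).2.mp (hall b (Finset.mem_univ b))
    · rintro rfl; rfl
end

section
/- (Monotonicity of the Shepp–Vardi EM iteration.) Let λ0 be admissible and assume that for every b ∈ B there exists d ∈ D with n d * p b d > 0. Then T λ0 is admissible and the incomplete-data log-likelihood does not decrease along the EM step: ℓ (T λ0) ≥ ℓ λ0. -/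
open scoped BigOperators

/-- monotonicity of the Shepp–Vardi EM iteration: T λ0 is admissible and
ℓ does not decrease along the EM step. -/
theorem em_monotone {B D : Type*} [Fintype B] [Fintype D] [Nonempty B] [Nonempty D]
    (p : B → D → ℝ) (hp : ∀ b d, 0 ≤ p b d) (hpsum : ∀ b, ∑ d, p b d = 1)
    (n : D → ℝ) (hn : ∀ d, 0 ≤ n d)
    (lam0 : B → ℝ) (hlam0 : Admissible p n lam0)
    (hb : ∀ b, ∃ d, n d * p b d > 0) :
    Admissible p n (emT p n lam0) ∧ logLik p n (emT p n lam0) ≥ logLik p n lam0 := by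
  obtain ⟨h0pos, hg0⟩ := hlam0
  set lam1 := emT p n lam0 with hlam1def
  have hg0nn : ∀ d, 0 ≤ g p lam0 d := fun d =>
    Finset.sum_nonneg fun b _ => mul_nonneg (hp b d) (h0pos b).le
  have hterm_nn : ∀ b d, 0 ≤ n d * p b d / g p lam0 d := fun b d =>
    div_nonneg (mul_nonneg (hn d) (hp b d)) (hg0nn d)
  -- positivity of lam1
  have h1pos : ∀ b, 0 < lam1 b := by
    intro b
    obtain ⟨d0, hd0⟩ := hb b
    have hnd : 0 < n d0 := by nlinarith [hp b d0, hn d0]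
    have hpd : 0 < p b d0 := by nlinarith [hp b d0, hn d0]
    have hg0d : 0 < g p lam0 d0 := hg0 d0 hnd
    have hS : 0 < ∑ d, n d * p b d / g p lam0 d := by
      refine Finset.sum_pos' (fun d _ => hterm_nn b d) ⟨d0, Finset.mem_univ d0, ?_⟩
      positivity
    exact mul_pos (h0pos b) hS
  -- admissibility of lam1
  have hadm1 : Admissible p n lam1 := by
    refine ⟨h1pos, fun d hnd => ?_⟩
    have hg0d : 0 < g p lam0 d := hg0 d hnd
    obtain ⟨b0, -, hb0⟩ : ∃ b ∈ Finset.univ, (0 : ℝ) < p b d * lam0 b := by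
      apply Finset.exists_lt_of_sum_lt
      simpa [g] using hg0d
    have hpb0 : 0 < p b0 d := by nlinarith [h0pos b0]
    have : (0 : ℝ) < p b0 d * lam1 b0 := mul_pos hpb0 (h1pos b0)
    calc (0 : ℝ) < p b0 d * lam1 b0 := this
      _ ≤ g p lam1 d := Finset.single_le_sum
          (fun b _ => mul_nonneg (hp b d) (h1pos b).le) (Finset.mem_univ b0)
  refine ⟨hadm1, ?_⟩
  -- ratio: lam1 b / lam0 b = ∑ d, n d * p b d / g p lam0 d
  have hratio : ∀ b, ∑ d, n d * p b d / g p lam0 d = lam1 b / lam0 b := by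
    intro b
    rw [hlam1def]
    field_simp [emT, (h0pos b).ne']
    simp only [emT]; ring
  -- per-d Jensen inequality
  have key : ∀ d, ∑ b, n d * (p b d * lam0 b / g p lam0 d) * Real.log (lam1 b / lam0 b)
      ≤ n d * Real.log (g p lam1 d) - n d * Real.log (g p lam0 d) := by
    intro d
    rcases eq_or_lt_of_le (hn d) with h | h
    · simp [← h]
    · have hg0d : 0 < g p lam0 d := hg0 d h
      have hg1d : 0 < g p lam1 d := hadm1.2 d h
      have hjensen : ∑ b, (p b d * lam0 b / g p lam0 d) • Real.log (lam1 b / lam0 b)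
          ≤ Real.log (∑ b, (p b d * lam0 b / g p lam0 d) • (lam1 b / lam0 b)) := by
        apply strictConcaveOn_log_Ioi.concaveOn.le_map_sum
        · exact fun b _ => div_nonneg (mul_nonneg (hp b d) (h0pos b).le) hg0d.le
        · rw [← Finset.sum_div]
          exact div_self hg0d.ne'
        · exact fun b _ => div_pos (h1pos b) (h0pos b)
      have hcomb : ∑ b, (p b d * lam0 b / g p lam0 d) • (lam1 b / lam0 b)
          = g p lam1 d / g p lam0 d := by
        have hterm : ∀ b, (p b d * lam0 b / g p lam0 d) • (lam1 b / lam0 b)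
            = p b d * lam1 b / g p lam0 d := by
          intro b
          rw [smul_eq_mul, div_mul_div_comm, mul_comm (p b d) (lam0 b), mul_assoc,
            mul_comm (g p lam0 d) (lam0 b), mul_div_mul_left _ _ (h0pos b).ne']
        rw [Finset.sum_congr rfl fun b _ => hterm b, ← Finset.sum_div]
        rfl
      rw [hcomb, Real.log_div hg1d.ne' hg0d.ne'] at hjensen
      calc ∑ b, n d * (p b d * lam0 b / g p lam0 d) * Real.log (lam1 b / lam0 b)
          = n d * ∑ b, (p b d * lam0 b / g p lam0 d) • Real.log (lam1 b / lam0 b) := by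
            rw [Finset.mul_sum]; exact Finset.sum_congr rfl fun b _ => by
              rw [smul_eq_mul]; ring
        _ ≤ n d * (Real.log (g p lam1 d) - Real.log (g p lam0 d)) := by
            exact mul_le_mul_of_nonneg_left hjensen h.le
        _ = n d * Real.log (g p lam1 d) - n d * Real.log (g p lam0 d) := by ring
  -- swap the double sum
  have hswap : ∑ d, ∑ b, n d * (p b d * lam0 b / g p lam0 d) * Real.log (lam1 b / lam0 b)
      = ∑ b, lam1 b * Real.log (lam1 b / lam0 b) := by
    rw [Finset.sum_comm]
    refine Finset.sum_congr rfl fun b _ => ?_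
    have : ∑ d, n d * (p b d * lam0 b / g p lam0 d) * Real.log (lam1 b / lam0 b)
        = (lam0 b * Real.log (lam1 b / lam0 b)) * ∑ d, n d * p b d / g p lam0 d := by
      rw [Finset.mul_sum]
      exact Finset.sum_congr rfl fun d _ => by ring
    rw [this, hratio b]
    field_simp [(h0pos b).ne']
  -- total mass identity
  have hmass : ∀ lam : B → ℝ, ∑ d, g p lam d = ∑ b, lam b := by
    intro lam
    simp only [g]
    rw [Finset.sum_comm]
    exact Finset.sum_congr rfl fun b _ => by
      rw [← Finset.sum_mul, hpsum b, one_mul]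
  -- pointwise lower bound: lam1 b - lam0 b ≤ lam1 b * log (lam1 b / lam0 b)
  have hpt : ∀ b, lam1 b - lam0 b ≤ lam1 b * Real.log (lam1 b / lam0 b) := by
    intro b
    have h1 := Real.log_le_sub_one_of_pos (div_pos (h0pos b) (h1pos b))
    have hlog : Real.log (lam0 b / lam1 b) = - Real.log (lam1 b / lam0 b) := by
      rw [Real.log_div (h0pos b).ne' (h1pos b).ne',
          Real.log_div (h1pos b).ne' (h0pos b).ne']
      ring
    rw [hlog] at h1
    have hdiv : lam1 b * (lam0 b / lam1 b) = lam0 b := by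
      rw [mul_comm]
      exact div_mul_cancel₀ _ (h1pos b).ne'
    nlinarith [h1pos b]
  -- assemble
  have hsumkey : ∑ b, lam1 b * Real.log (lam1 b / lam0 b)
      ≤ ∑ d, (n d * Real.log (g p lam1 d) - n d * Real.log (g p lam0 d)) := by
    rw [← hswap]
    exact Finset.sum_le_sum fun d _ => key d
  have hfinal : ∑ b, (lam1 b - lam0 b) ≤ ∑ b, lam1 b * Real.log (lam1 b / lam0 b) :=
    Finset.sum_le_sum fun b _ => hpt b
  simp only [logLik, ge_iff_le]
  have expand : ∀ lam : B → ℝ, ∑ d, (n d * Real.log (g p lam d) - g p lam d)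
      = (∑ d, n d * Real.log (g p lam d)) - ∑ d, g p lam d := by
    intro lam; rw [Finset.sum_sub_distrib]
  rw [expand, expand, hmass lam0, hmass lam1]
  have h1 : ∑ d, (n d * Real.log (g p lam1 d) - n d * Real.log (g p lam0 d))
      = (∑ d, n d * Real.log (g p lam1 d)) - ∑ d, n d * Real.log (g p lam0 d) := by
    rw [Finset.sum_sub_distrib]
  have h2 : ∑ b, (lam1 b - lam0 b) = (∑ b, lam1 b) - ∑ b, lam0 b := by
    rw [Finset.sum_sub_distrib]
  rw [h1] at hsumkey
  rw [h2] at hfinal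
  linarith
end

section
/- Assume that for every d ∈ D with n d > 0 there exists b ∈ B with p b d > 0. Let λ̂ be admissible and satisfy the MLE stationarity condition ∑_{d ∈ D} n d * p b d / g λ̂ d = 1 for every b ∈ B. Then λ̂ is a global maximizer of the incomplete-data log-likelihood over the positive orthant: ℓ λ̂ ≥ ℓ λ for every λ with λ b > 0 for all b. -/
open scoped BigOperators

/-- an admissible stationary point is a global maximizer of ℓ
over the positive orthant. -/
theorem stationary_is_global_max {B D : Type*} [Fintype B] [Fintype D] [Nonempty B] [Nonempty D]
    (p : B → D → ℝ) (hp : ∀ b d, 0 ≤ p b d) (hpsum : ∀ b, ∑ d, p b d = 1)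
    (n : D → ℝ) (hn : ∀ d, 0 ≤ n d)
    (hpos : ∀ d, n d > 0 → ∃ b, p b d > 0)
    (lamhat : B → ℝ) (hlamhat : Admissible p n lamhat)
    (hstat : ∀ b, ∑ d, n d * p b d / g p lamhat d = 1) :
    ∀ lam : B → ℝ, (∀ b, lam b > 0) → logLik p n lamhat ≥ logLik p n lam  := by
  intro lam hlam
  obtain ⟨hhatpos, hhatg⟩ := hlamhat
  -- key identity: for any mu, ∑_d n d * g mu d / ĝ d = ∑_b mu b
  have key : ∀ mu : B → ℝ, ∑ d, n d * g p mu d / g p lamhat d = ∑ b, mu b := by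
    intro mu
    have h1 : ∀ d, n d * g p mu d / g p lamhat d
        = ∑ b, (n d * p b d / g p lamhat d) * mu b := by
      intro d
      rw [g, Finset.mul_sum, Finset.sum_div]
      refine Finset.sum_congr rfl fun b _ => by ring
    calc ∑ d, n d * g p mu d / g p lamhat d
        = ∑ d, ∑ b, (n d * p b d / g p lamhat d) * mu b := by
          exact Finset.sum_congr rfl fun d _ => h1 d
      _ = ∑ b, ∑ d, (n d * p b d / g p lamhat d) * mu b := Finset.sum_comm
      _ = ∑ b, (∑ d, n d * p b d / g p lamhat d) * mu b := by
          refine Finset.sum_congr rfl fun b _ => ?_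
          rw [Finset.sum_mul]
      _ = ∑ b, mu b := by
          refine Finset.sum_congr rfl fun b _ => ?_
          rw [hstat b, one_mul]
  have hsumn : ∑ d, n d = ∑ b, lamhat b := by
    rw [← key lamhat]
    refine Finset.sum_congr rfl fun d _ => ?_
    rcases eq_or_lt_of_le (hn d) with h | h
    · simp [← h]
    · rw [mul_div_assoc, div_self (ne_of_gt (hhatg d h)), mul_one]
  have hsumg : ∀ mu : B → ℝ, ∑ d, g p mu d = ∑ b, mu b := by
    intro mu
    calc ∑ d, g p mu d = ∑ b, ∑ d, p b d * mu b := Finset.sum_comm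
      _ = ∑ b, mu b := by
          refine Finset.sum_congr rfl fun b _ => ?_
          rw [← Finset.sum_mul, hpsum b, one_mul]
  -- pointwise bound
  have hpt : ∀ d, n d * Real.log (g p lam d) - g p lam d
      ≤ (n d * Real.log (g p lamhat d) + n d * g p lam d / g p lamhat d - n d)
        - g p lam d := by
    intro d
    have : n d * Real.log (g p lam d)
        ≤ n d * Real.log (g p lamhat d) + n d * g p lam d / g p lamhat d - n d := by
      rcases eq_or_lt_of_le (hn d) with h | h
      · simp [← h]
      · have hgh : 0 < g p lamhat d := hhatg d h
        have hg : 0 < g p lam d := by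
          obtain ⟨b, hb⟩ := hpos d h
          have : 0 < p b d * lam b := mul_pos hb (hlam b)
          refine Finset.sum_pos' (fun b' _ => mul_nonneg (hp b' d) (le_of_lt (hlam b'))) ⟨b, Finset.mem_univ b, this⟩
        have hlog : Real.log (g p lam d) - Real.log (g p lamhat d)
            ≤ g p lam d / g p lamhat d - 1 := by
          rw [← Real.log_div (ne_of_gt hg) (ne_of_gt hgh)]
          exact Real.log_le_sub_one_of_pos (div_pos hg hgh)
        have h2 := mul_le_mul_of_nonneg_left hlog (le_of_lt h)
        rw [mul_sub, mul_sub, mul_one, ← mul_div_assoc] at h2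
        linarith
    linarith
  have hsum := Finset.sum_le_sum (fun d (_ : d ∈ Finset.univ) => hpt d)
  have hRHS : ∑ d, ((n d * Real.log (g p lamhat d) + n d * g p lam d / g p lamhat d - n d)
      - g p lam d) = logLik p n lamhat := by
    have expand : ∑ d, ((n d * Real.log (g p lamhat d) + n d * g p lam d / g p lamhat d - n d)
        - g p lam d)
        = (∑ d, (n d * Real.log (g p lamhat d) - g p lamhat d))
          + (∑ d, n d * g p lam d / g p lamhat d) - (∑ d, n d)
          - (∑ d, g p lam d) + (∑ d, g p lamhat d) := by
      rw [Finset.sum_sub_distrib, Finset.sum_sub_distrib, Finset.sum_add_distrib,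
        Finset.sum_sub_distrib]
      ring
    rw [expand, key lam, hsumn, hsumg lam, hsumg lamhat, logLik]
    ring
  have hle : logLik p n lam ≤ logLik p n lamhat := by
    rw [logLik, ← hRHS]; exact hsum
  exact hle
end

section
/- (Bilinear form of Theorem 1.) Let λ be admissible. The second Fréchet derivative of the incomplete-data log-likelihood ℓ at λ exists and, applied to directions v, w : B → ℝ, equals −∑_{d ∈ D} (n d / (g λ d)^2) * (∑_{b ∈ B} p b d * v b) * (∑_{b ∈ B} p b d * w b). -/
open scoped BigOperators

/-- bilinear form of Theorem 1: ℓ is twice differentiable at admissible λ and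
its second Fréchet derivative applied to directions v, w equals
`-∑ d, (n d / (g λ d)^2) * (∑ b, p b d * v b) * (∑ b, p b d * w b)`. -/
theorem logLik_second_frechet {B D : Type*} [Fintype B] [Fintype D] [Nonempty B] [Nonempty D]
    (p : B → D → ℝ) (hp : ∀ b d, 0 ≤ p b d) (hpsum : ∀ b, ∑ d, p b d = 1)
    (n : D → ℝ) (hn : ∀ d, 0 ≤ n d)
    (lam : B → ℝ) (hlam : Admissible p n lam) :
    ContDiffAt ℝ 2 (logLik p n) lam ∧
    ∀ v w : B → ℝ, iteratedFDeriv ℝ 2 (logLik p n) lam ![v, w] =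
      -∑ d, (n d / (g p lam d) ^ 2) * (∑ b, p b d * v b) * (∑ b, p b d * w b) := by
  classical
  -- The continuous linear map `v ↦ ∑ b, p b d * v b`
  set L : D → (B → ℝ) →L[ℝ] ℝ := fun d => ∑ b, p b d • ContinuousLinearMap.proj b with hLdef
  have hLapp : ∀ d v, L d v = ∑ b, p b d * v b := by
    intro d v
    simp [hLdef, ContinuousLinearMap.sum_apply]
  have hgL : ∀ (μ : B → ℝ) d, g p μ d = L d μ := by
    intro μ d; rw [hLapp]; rfl
  have hgfun : ∀ d, (fun μ : B → ℝ => g p μ d) = fun μ => L d μ := by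
    intro d; funext μ; exact hgL μ d
  -- eventually, all the relevant projections stay positive
  have hU : ∀ᶠ μ in nhds lam, ∀ d, n d > 0 → g p μ d > 0 := by
    rw [Filter.eventually_all]
    intro d
    by_cases hd : n d > 0
    · have hmem : lam ∈ (L d) ⁻¹' Set.Ioi (0 : ℝ) := by
        simp only [Set.mem_preimage, Set.mem_Ioi]
        rw [← hgL]; exact hlam.2 d hd
      have hopen : IsOpen ((L d) ⁻¹' Set.Ioi (0 : ℝ)) :=
        isOpen_Ioi.preimage (L d).continuous
      filter_upwards [hopen.eventually_mem hmem] with μ hμ _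
      rw [hgL]; exact hμ
    · filter_upwards with μ hμ; exact absurd hμ hd
  -- first derivative on the good set
  have hderiv : ∀ μ : B → ℝ, (∀ d, n d > 0 → g p μ d > 0) →
      HasFDerivAt (logLik p n) (∑ d, (n d / g p μ d - 1) • L d) μ := by
    intro μ hμ
    have : HasFDerivAt (fun μ : B → ℝ => ∑ d, (n d * Real.log (g p μ d) - g p μ d))
        (∑ d, (n d / g p μ d - 1) • L d) μ := by
      apply HasFDerivAt.fun_sum
      intro d _
      by_cases hd : n d > 0
      · have hne : g p μ d ≠ 0 := ne_of_gt (hμ d hd)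
        have h1 : HasFDerivAt (fun μ : B → ℝ => g p μ d) (L d) μ := by
          rw [hgfun d]; exact (L d).hasFDerivAt
        have h2 := ((h1.log hne).const_mul (n d)).sub h1
        have he : (n d / g p μ d - 1) • L d = n d • (g p μ d)⁻¹ • L d - L d := by
          ext x
          simp only [ContinuousLinearMap.sub_apply, ContinuousLinearMap.smul_apply, smul_eq_mul]
          field_simp
        rw [he]; exact h2
      · have hd0 : n d = 0 := le_antisymm (not_lt.1 hd) (hn d)
        have h1 : HasFDerivAt (fun μ : B → ℝ => g p μ d) (L d) μ := by
          rw [hgfun d]; exact (L d).hasFDerivAt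
        simp only [hd0, zero_mul, zero_sub, zero_div]
        have he : ((-1 : ℝ)) • L d = -L d := by ext x; simp
        rw [he]
        exact h1.neg
    exact this.congr_of_eventuallyEq (by filter_upwards with μ; rfl)
  -- the second derivative as a continuous linear map
  set F : (B → ℝ) →L[ℝ] ((B → ℝ) →L[ℝ] ℝ) :=
    ∑ d, ((-(n d / (g p lam d) ^ 2)) • L d).smulRight (L d) with hFdef
  have hderiv2 : HasFDerivAt (fun μ => ∑ d, (n d / g p μ d - 1) • L d) F lam := by
    rw [hFdef]
    apply HasFDerivAt.fun_sum
    intro d _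
    by_cases hd : n d > 0
    · have hgpos := hlam.2 d hd
      have hne : g p lam d ≠ 0 := ne_of_gt hgpos
      have h1 : HasFDerivAt (fun μ : B → ℝ => g p μ d) (L d) lam := by
        rw [hgfun d]; exact (L d).hasFDerivAt
      have hinv : HasFDerivAt (fun μ : B → ℝ => (g p μ d)⁻¹)
          ((-(g p lam d ^ 2)⁻¹) • L d) lam := by
        have := (hasDerivAt_inv hne).comp_hasFDerivAt lam h1
        exact this.congr_of_eventuallyEq (by filter_upwards with μ; rfl)
      have h2 := ((hinv.const_mul (n d)).sub_const 1).smul_const (L d)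
      have heq : (fun μ : B → ℝ => (n d * (g p μ d)⁻¹ - 1) • L d)
          = fun μ : B → ℝ => (n d / g p μ d - 1) • L d := by
        funext μ; rw [div_eq_mul_inv]
      rw [heq] at h2
      have hkey : ((-(n d / g p lam d ^ 2)) • L d).smulRight (L d)
          = ((n d • (-(g p lam d ^ 2)⁻¹) • L d)).smulRight (L d) := by
        ext u x
        simp only [ContinuousLinearMap.smulRight_apply, ContinuousLinearMap.smul_apply,
          smul_eq_mul]
        field_simp
      rw [hkey]
      exact h2
    · have hd0 : n d = 0 := le_antisymm (not_lt.1 hd) (hn d)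
      have : (fun μ : B → ℝ => (n d / g p μ d - 1) • L d)
          = fun _ : B → ℝ => (-1 : ℝ) • L d := by
        funext μ; rw [hd0, zero_div, zero_sub]
      rw [this, hd0]
      simp only [zero_div, neg_zero, zero_smul]
      have hz : ((0 : (B → ℝ) →L[ℝ] ℝ)).smulRight (L d) = 0 := by
        ext v; simp
      rw [hz]
      exact hasFDerivAt_const _ _
  -- fderiv agrees with the explicit formula near lam
  have hEV : (fun μ => fderiv ℝ (logLik p n) μ)
      =ᶠ[nhds lam] fun μ => ∑ d, (n d / g p μ d - 1) • L d := by
    filter_upwards [hU] with μ hμ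
    exact (hderiv μ hμ).fderiv
  have hF2 : HasFDerivAt (fderiv ℝ (logLik p n)) F lam :=
    hderiv2.congr_of_eventuallyEq hEV
  constructor
  · -- smoothness
    have : ContDiffAt ℝ 2 (fun μ : B → ℝ => ∑ d, (n d * Real.log (g p μ d) - g p μ d)) lam := by
      apply ContDiffAt.sum
      intro d _
      have hLcd : ContDiffAt ℝ 2 (fun μ : B → ℝ => g p μ d) lam := by
        rw [hgfun d]; exact (L d).contDiff.contDiffAt
      by_cases hd : n d > 0
      · have hne : g p lam d ≠ 0 := ne_of_gt (hlam.2 d hd)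
        exact (contDiffAt_const.mul ((Real.contDiffAt_log.mpr hne).comp lam hLcd)).sub hLcd
      · have hd0 : n d = 0 := le_antisymm (not_lt.1 hd) (hn d)
        simp only [hd0, zero_mul, zero_sub]
        exact hLcd.neg
    exact this.congr_of_eventuallyEq (by filter_upwards with μ; rfl)
  · intro v w
    rw [iteratedFDeriv_two_apply]
    have hm0 : (![v, w] : Fin 2 → B → ℝ) 0 = v := rfl
    have hm1 : (![v, w] : Fin 2 → B → ℝ) 1 = w := rfl
    rw [hm0, hm1, hF2.fderiv, hFdef]
    simp only [ContinuousLinearMap.sum_apply, ContinuousLinearMap.smulRight_apply,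
      ContinuousLinearMap.smul_apply, smul_eq_mul, hLapp]
    rw [← Finset.sum_neg_distrib]
    apply Finset.sum_congr rfl
    intro d _
    ring
end
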